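/- Let H be a 3-partite 3-graph with classes each of size n, let M be a maximum matching in H, and let X_i = V_i \ V(M). For any S = (x_1,x_2,x_3) with x_i ∈ X_i and any two edges e_1, e_2 ∈ M, the link graph L_S(e_1,e_2) = L_{x_1}(e_1,e_2) ∪ L_{x_2}(e_1,e_2) ∪ L_{x_3}(e_1,e_2) does not contain a matching of size 3. -/
import Mathlib


/-- `M` is a matching in the 3-partite 3-graph `H` (edges encoded as functions
`Fin 3 → Fin n`, one vertex per class). -/
def IsMatching {n : ℕ} (H M : Finset (Fin 3 → Fin n)) : Prop :=
  M ⊆ H ∧ ∀ e ∈ M, ∀ f ∈ M, e ≠ f → ∀ i, e i ≠ f i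

/-- A pair of the link graph `L_{x c}(e₁,e₂)`, recorded via the full edge `g = {x c} ∪ T`:
`g` is an edge of `H` through the vertex `x c` of class `c`, all of whose other vertices
lie in `V(e₁) ∪ V(e₂)` (at most one in each `V(e_j)` is automatic since `g` is legal). -/
def IsLinkPair {n : ℕ} (H : Finset (Fin 3 → Fin n)) (x : Fin 3 → Fin n)
    (e₁ e₂ : Fin 3 → Fin n) (c : Fin 3) (g : Fin 3 → Fin n) : Prop :=
  g ∈ H ∧ g c = x c ∧ ∀ j, j ≠ c → (g j = e₁ j ∨ g j = e₂ j)

/-- The pairs represented by `(c, g)` and `(c', g')` are vertex-disjoint. -/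
def PairDisjoint {n : ℕ} (c c' : Fin 3) (g g' : Fin 3 → Fin n) : Prop :=
  ∀ j, j ≠ c → j ≠ c' → g j ≠ g' j

private lemma fin3_cover_ne (c₁ c₂ c₃ : Fin 3)
    (h : ∀ j : Fin 3, j = c₁ ∨ j = c₂ ∨ j = c₃) :
    c₁ ≠ c₂ ∧ c₁ ≠ c₃ ∧ c₂ ≠ c₃ := by
  revert h; revert c₁ c₂ c₃; decide

/-- Let `M` be a maximum matching in a 3-partite 3-graph `H`, let `x i ∈ X_i` be
uncovered vertices, one per class, and let `e₁ ≠ e₂` be edges of `M`. Then the union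
link graph `L_S(e₁,e₂) = L_{x₁}(e₁,e₂) ∪ L_{x₂}(e₁,e₂) ∪ L_{x₃}(e₁,e₂)` contains no
matching of size 3. -/
theorem link_no_matching_of_size_three {n : ℕ} (H M : Finset (Fin 3 → Fin n))
    (hM : IsMatching H M) (hmax : ∀ M', IsMatching H M' → M'.card ≤ M.card)
    (x : Fin 3 → Fin n) (hx : ∀ i, ∀ e ∈ M, e i ≠ x i)
    (e₁ e₂ : Fin 3 → Fin n) (he₁ : e₁ ∈ M) (he₂ : e₂ ∈ M) (hne : e₁ ≠ e₂) :
    ¬ ∃ (c₁ c₂ c₃ : Fin 3) (g₁ g₂ g₃ : Fin 3 → Fin n),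
        IsLinkPair H x e₁ e₂ c₁ g₁ ∧ IsLinkPair H x e₁ e₂ c₂ g₂ ∧
        IsLinkPair H x e₁ e₂ c₃ g₃ ∧
        PairDisjoint c₁ c₂ g₁ g₂ ∧ PairDisjoint c₁ c₃ g₁ g₃ ∧
        PairDisjoint c₂ c₃ g₂ g₃ := by
  rintro ⟨c₁, c₂, c₃, g₁, g₂, g₃, h₁, h₂, h₃, d₁₂, d₁₃, d₂₃⟩
  obtain ⟨hMH, hMm⟩ := hM
  -- the three classes must cover `Fin 3`
  have hcov : ∀ j : Fin 3, j = c₁ ∨ j = c₂ ∨ j = c₃ := by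
    intro j
    by_contra hj
    push_neg at hj
    obtain ⟨hj₁, hj₂, hj₃⟩ := hj
    rcases h₁.2.2 j hj₁ with a | a <;>
    rcases h₂.2.2 j hj₂ with b | b <;>
    rcases h₃.2.2 j hj₃ with c | c <;>
    first
      | exact d₁₂ j hj₁ hj₂ (a.trans b.symm)
      | exact d₁₃ j hj₁ hj₃ (a.trans c.symm)
      | exact d₂₃ j hj₂ hj₃ (b.trans c.symm)
  obtain ⟨n12, n13, n23⟩ := fin3_cover_ne c₁ c₂ c₃ hcov
  -- coordinatewise disjointness of the new edges
  have key : ∀ (c c' : Fin 3) (g g' : Fin 3 → Fin n),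
      IsLinkPair H x e₁ e₂ c g → IsLinkPair H x e₁ e₂ c' g' →
      c ≠ c' → PairDisjoint c c' g g' → ∀ j, g j ≠ g' j := by
    intro c c' g g' hg hg' hcc' hd j
    by_cases hjc : j = c
    · subst hjc
      rw [hg.2.1]
      rcases hg'.2.2 j hcc' with a | a <;> rw [a]
      · exact (hx j e₁ he₁).symm
      · exact (hx j e₂ he₂).symm
    · by_cases hjc' : j = c'
      · subst hjc'
        rw [hg'.2.1]
        rcases hg.2.2 j hjc with a | a <;> rw [a]
        · exact hx j e₁ he₁
        · exact hx j e₂ he₂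
      · exact hd j hjc hjc'
  have K12 := key c₁ c₂ g₁ g₂ h₁ h₂ n12 d₁₂
  have K13 := key c₁ c₃ g₁ g₃ h₁ h₃ n13 d₁₃
  have K23 := key c₂ c₃ g₂ g₃ h₂ h₃ n23 d₂₃
  -- coordinatewise disjointness from the remaining edges of `M`
  have keyM : ∀ (c : Fin 3) (g : Fin 3 → Fin n), IsLinkPair H x e₁ e₂ c g →
      ∀ f ∈ M, f ≠ e₁ → f ≠ e₂ → ∀ j, g j ≠ f j := by
    intro c g hg f hf hf1 hf2 j
    by_cases hjc : j = c
    · subst hjc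
      rw [hg.2.1]
      exact (hx j f hf).symm
    · rcases hg.2.2 j hjc with a | a <;> rw [a]
      · exact (hMm f hf e₁ he₁ hf1 j).symm
      · exact (hMm f hf e₂ he₂ hf2 j).symm
  have KM1 := keyM c₁ g₁ h₁
  have KM2 := keyM c₂ g₂ h₂
  have KM3 := keyM c₃ g₃ h₃
  -- new edges are not covered edges
  have hgnotM : ∀ (c : Fin 3) (g : Fin 3 → Fin n), IsLinkPair H x e₁ e₂ c g → g ∉ M := by
    intro c g hg hgM
    exact hx c g hgM hg.2.1
  -- build the bigger matching
  set M' := insert g₁ (insert g₂ (insert g₃ (M \ {e₁, e₂}))) with hM'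
  have hmem : ∀ f, f ∈ M' ↔ f = g₁ ∨ f = g₂ ∨ f = g₃ ∨ (f ∈ M ∧ f ≠ e₁ ∧ f ≠ e₂) := by
    intro f
    simp only [hM', Finset.mem_insert, Finset.mem_sdiff, Finset.mem_singleton, not_or]
    try tauto
  have hmatch : IsMatching H M' := by
    constructor
    · intro f hf
      rcases (hmem f).1 hf with rfl | rfl | rfl | ⟨hfM, _, _⟩
      · exact h₁.1
      · exact h₂.1
      · exact h₃.1
      · exact hMH hfM
    · intro e he f hf hef i
      rcases (hmem e).1 he with rfl | rfl | rfl | ⟨heM, he1, he2⟩ <;>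
      rcases (hmem f).1 hf with rfl | rfl | rfl | ⟨hfM, hf1, hf2⟩ <;>
      first
        | exact absurd rfl hef
        | exact K12 i
        | exact (K12 i).symm
        | exact K13 i
        | exact (K13 i).symm
        | exact K23 i
        | exact (K23 i).symm
        | exact KM1 f hfM hf1 hf2 i
        | exact (KM1 e heM he1 he2 i).symm
        | exact KM2 f hfM hf1 hf2 i
        | exact (KM2 e heM he1 he2 i).symm
        | exact KM3 f hfM hf1 hf2 i
        | exact (KM3 e heM he1 he2 i).symm
        | exact hMm e heM f hfM hef i
  -- cardinality computations
  have hg3 : g₃ ∉ M \ ({e₁, e₂} : Finset (Fin 3 → Fin n)) :=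
    fun h => hgnotM c₃ g₃ h₃ (Finset.mem_sdiff.1 h).1
  have hg2 : g₂ ∉ insert g₃ (M \ ({e₁, e₂} : Finset (Fin 3 → Fin n))) := by
    simp only [Finset.mem_insert]
    rintro (rfl | h)
    · exact K23 0 rfl
    · exact hgnotM c₂ g₂ h₂ (Finset.mem_sdiff.1 h).1
  have hg1 : g₁ ∉ insert g₂ (insert g₃ (M \ ({e₁, e₂} : Finset (Fin 3 → Fin n)))) := by
    simp only [Finset.mem_insert]
    rintro (rfl | rfl | h)
    · exact K12 0 rfl
    · exact K13 0 rfl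
    · exact hgnotM c₁ g₁ h₁ (Finset.mem_sdiff.1 h).1
  have hcard : M'.card = (M \ ({e₁, e₂} : Finset (Fin 3 → Fin n))).card + 3 := by
    rw [hM', Finset.card_insert_of_notMem hg1, Finset.card_insert_of_notMem hg2,
      Finset.card_insert_of_notMem hg3]
  have hsub : ({e₁, e₂} : Finset (Fin 3 → Fin n)) ⊆ M := by
    simp [Finset.insert_subset_iff, he₁, he₂]
  have hpair : ({e₁, e₂} : Finset (Fin 3 → Fin n)).card = 2 := by
    rw [Finset.card_insert_of_notMem (by simp [hne]), Finset.card_singleton]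
  have hcard2 : (M \ ({e₁, e₂} : Finset (Fin 3 → Fin n))).card = M.card - 2 := by
    rw [Finset.card_sdiff_of_subset hsub, hpair]
  have h2 : 2 ≤ M.card := by
    have := Finset.card_le_card hsub
    rwa [hpair] at this
  have hle := hmax M' hmatch
  omega
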